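/- If Γ is a d-collapsible simplicial complex and every nonface of Γ has dimension at least d, then Γ is chordal (d-chordal for every positive integer t). -/

import Mathlib

namespace ChordalPaper

/-- A simplicial complex on vertex set `Fin n`: a family of finsets closed under subsets. -/
def IsComplex {n : ℕ} (Γ : Set (Finset (Fin n))) : Prop :=
  ∀ F ∈ Γ, ∀ F' ⊆ F, F' ∈ Γ

/-- The `d`-closure `Δ_d(Γ)`: all subsets of size `≤ d`, together with all subsets
all of whose `(d+1)`-element subsets are faces of `Γ`. -/
def dClosure {n : ℕ} (d : ℕ) (Γ : Set (Finset (Fin n))) : Set (Finset (Fin n)) :=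
  {F | F.card ≤ d ∨ ∀ G ⊆ F, G.card = d + 1 → G ∈ Γ}

/-- The pure `(d-1)`-skeleton `⟨[n]⟩^{[d-1]}` of the full simplex: all subsets of size `≤ d`. -/
def fullSkel (n d : ℕ) : Set (Finset (Fin n)) := {F | F.card ≤ d}

/-- A facet: a maximal face. -/
def IsFacet {n : ℕ} (Γ : Set (Finset (Fin n))) (F : Finset (Fin n)) : Prop :=
  F ∈ Γ ∧ ∀ G ∈ Γ, F ⊆ G → G = F

/-- A free face: a face contained in a unique facet. -/
def IsFreeFace {n : ℕ} (Γ : Set (Finset (Fin n))) (E : Finset (Fin n)) : Prop :=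
  E ∈ Γ ∧ ∃! F, IsFacet Γ F ∧ E ⊆ F

/-- Collapse at `E`: remove all faces containing `E` (including `E` itself). -/
def collapseFace {n : ℕ} (Γ : Set (Finset (Fin n))) (E : Finset (Fin n)) :
    Set (Finset (Fin n)) := {F ∈ Γ | ¬ E ⊆ F}

/-- Successive collapses along a list of faces. -/
def collapseList {n : ℕ} (Γ : Set (Finset (Fin n))) :
    List (Finset (Fin n)) → Set (Finset (Fin n))
  | [] => Γ
  | E :: L => collapseList (collapseFace Γ E) L

/-- A free sequence: each face is free in the complex obtained by collapsing the previous ones. -/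
def IsFreeSeq {n : ℕ} (Γ : Set (Finset (Fin n))) : List (Finset (Fin n)) → Prop
  | [] => True
  | E :: L => IsFreeFace Γ E ∧ IsFreeSeq (collapseFace Γ E) L

/-- `d`-collapsibility: a sequence of elementary `d`-collapsings (at free faces of
dimension `< d`, i.e. cardinality `≤ d`) reduces `Γ` to the void complex. -/
def Collapsible {n : ℕ} (d : ℕ) (Γ : Set (Finset (Fin n))) : Prop :=
  ∃ L : List (Finset (Fin n)),
    IsFreeSeq Γ L ∧ (∀ E ∈ L, E.card ≤ d) ∧ collapseList Γ L = ∅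

/-- Simplicial deletion `Γ∖E`: remove all faces strictly containing `E` (keeping `E`). -/
def srDel {n : ℕ} (Γ : Set (Finset (Fin n))) (E : Finset (Fin n)) :
    Set (Finset (Fin n)) := {F ∈ Γ | ¬ E ⊂ F}

/-- Successive simplicial deletions along a list of faces. -/
def srDelList {n : ℕ} (Γ : Set (Finset (Fin n))) :
    List (Finset (Fin n)) → Set (Finset (Fin n))
  | [] => Γ
  | E :: L => srDelList (srDel Γ E) L

/-- A simplicial order for a `d`-closure on `Fin n`: a sequence of non-facet free faces of
cardinality `d` whose successive simplicial deletions reduce the complex to the pure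
`(d-1)`-skeleton of the full simplex. -/
def IsSimpOrder {n : ℕ} (d : ℕ) (Γ : Set (Finset (Fin n))) :
    List (Finset (Fin n)) → Prop
  | [] => Γ = fullSkel n d
  | E :: L => E.card = d ∧ IsFreeFace Γ E ∧ ¬ IsFacet Γ E ∧ IsSimpOrder d (srDel Γ E) L

/-- `Γ` is `d`-chordal: its `d`-closure equals the pure `(d-1)`-skeleton of the full
simplex or admits a simplicial order. -/
def DChordal {n : ℕ} (d : ℕ) (Γ : Set (Finset (Fin n))) : Prop :=
  ∃ L, IsSimpOrder d (dClosure d Γ) L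

/-- A minimal nonface of `Γ`. -/
def IsMinNonface {n : ℕ} (Γ : Set (Finset (Fin n))) (F : Finset (Fin n)) : Prop :=
  F ∉ Γ ∧ ∀ G ⊂ F, G ∈ Γ

end ChordalPaper

namespace ChordalPaper

variable {n : ℕ}

/-- The interval of sets between `E` and `F` of cardinality `> t`. -/
def Ivl (t : ℕ) (E F : Finset (Fin n)) : Set (Finset (Fin n)) :=
  {G | E ⊆ G ∧ G ⊆ F ∧ t < G.card}

lemma exists_facet (Δ : Set (Finset (Fin n))) {G : Finset (Fin n)} (hG : G ∈ Δ) :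
    ∃ F, IsFacet Δ F ∧ G ⊆ F := by
  obtain ⟨F, hF, hmax⟩ := Set.Finite.exists_maximalFor (fun s : Finset (Fin n) => s.card)
      {H | H ∈ Δ ∧ G ⊆ H} (Set.toFinite _) ⟨G, hG, Finset.Subset.refl _⟩
  refine ⟨F, ⟨hF.1, fun K hK hFK => ?_⟩, hF.2⟩
  have h := hmax (j := K) ⟨hK, hF.2.trans hFK⟩ (Finset.card_le_card hFK)
  exact (Finset.eq_of_subset_of_card_le hFK h.ge).symm

lemma ivl_empty_of_card_le {t : ℕ} {E F : Finset (Fin n)} (h : F.card ≤ t) :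
    Ivl (n := n) t E F = ∅ := by
  ext G
  simp only [Ivl, Set.mem_setOf_eq, Set.mem_empty_iff_false, iff_false, not_and]
  intro _ hGF hGc
  have := Finset.card_le_card hGF
  omega

/-- Interval deletion: if all faces of `Δ` containing `E` of size `> t` are inside `F`,
then the interval `Ivl t E F` can be removed by valid simplicial-order steps. -/
lemma interval_del (t : ℕ) :
    ∀ (k : ℕ) (Δ : Set (Finset (Fin n))) (E F : Finset (Fin n)),
      F.card - E.card ≤ k → E ⊆ F → E.card ≤ t →
      (∀ G : Finset (Fin n), G.card ≤ t → G ∈ Δ) →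
      (∀ G : Finset (Fin n), E ⊆ G → G ⊆ F → G ∈ Δ) →
      (∀ G ∈ Δ, E ⊆ G → t < G.card → G ⊆ F) →
      ∀ L, IsSimpOrder t (Δ \ Ivl t E F) L →
      ∃ M, IsSimpOrder t Δ (M ++ L) := by
  intro k
  induction k with
  | zero =>
    intro Δ E F hk hEF hEt h1 h2 h3 L hL
    have hcard : F.card ≤ t := by
      have := Finset.card_le_card hEF
      omega
    exact ⟨[], by simpa [ivl_empty_of_card_le hcard, Set.diff_empty] using hL⟩
  | succ k ih =>
    intro Δ E F hk hEF hEt h1 h2 h3 L hL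
    by_cases hFt : F.card ≤ t
    · exact ⟨[], by simpa [ivl_empty_of_card_le hFt, Set.diff_empty] using hL⟩
    push_neg at hFt
    by_cases hEt' : E.card = t
    · -- a single simplicial deletion step at `E`
      have hFΔ : F ∈ Δ := h2 F hEF (Finset.Subset.refl F)
      have hfacetF : IsFacet Δ F := by
        refine ⟨hFΔ, fun G hG hFG => ?_⟩
        have hGc : t < G.card := lt_of_lt_of_le hFt (Finset.card_le_card hFG)
        exact Finset.Subset.antisymm (h3 G hG (hEF.trans hFG) hGc) hFG
      have hfree : IsFreeFace Δ E := by
        refine ⟨h1 E (le_of_eq hEt'), F, ⟨hfacetF, hEF⟩, ?_⟩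
        rintro F' ⟨hF', hEF'⟩
        have hF'F : F' ⊆ F := by
          by_cases hc : t < F'.card
          · exact h3 F' hF'.1 hEF' hc
          · have hc2 : F'.card ≤ E.card := by omega
            have : E = F' := Finset.eq_of_subset_of_card_le hEF' hc2
            exact this ▸ hEF
        exact (hF'.2 F hFΔ hF'F).symm
      have hnotfacet : ¬ IsFacet Δ E := by
        rintro ⟨-, hmax⟩
        have h := hmax F hFΔ hEF
        have : F.card = E.card := by rw [h]
        omega
      have hdel : srDel Δ E = Δ \ Ivl t E F := by
        ext G
        simp only [srDel, Ivl, Set.mem_setOf_eq, Set.mem_diff, Set.sep_setOf]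
        constructor
        · rintro ⟨hGΔ, hns⟩
          refine ⟨hGΔ, ?_⟩
          rintro ⟨hEG, hGF, hGc⟩
          refine hns (Finset.ssubset_iff_subset_ne.2 ⟨hEG, ?_⟩)
          intro h
          rw [h] at hEt'
          omega
        · rintro ⟨hGΔ, hni⟩
          refine ⟨hGΔ, fun hss => hni ?_⟩
          have hEG := hss.subset
          have hGc : t < G.card := by
            have := Finset.card_lt_card hss
            omega
          exact ⟨hEG, h3 G hGΔ hEG hGc, hGc⟩
      refine ⟨[E], ?_⟩
      show IsSimpOrder t Δ (E :: L)
      exact ⟨hEt', hfree, hnotfacet, by rw [hdel]; exact hL⟩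
    · -- |E| < t : split off an element x of F \ E
      have hEcard : E.card < t := lt_of_le_of_ne hEt hEt'
      have hne : (F \ E).Nonempty := by
        rw [Finset.sdiff_nonempty]
        intro hFE'
        have := Finset.card_le_card hFE'
        omega
      obtain ⟨x, hx⟩ := hne
      have hxF : x ∈ F := (Finset.mem_sdiff.1 hx).1
      have hxE : x ∉ E := (Finset.mem_sdiff.1 hx).2
      have hins : (insert x E).card = E.card + 1 := Finset.card_insert_of_notMem hxE
      have hsplit : Ivl (n := n) t E F = Ivl t (insert x E) F ∪ Ivl t E (F.erase x) := by
        ext G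
        simp only [Ivl, Set.mem_setOf_eq, Set.mem_union]
        constructor
        · rintro ⟨hEG, hGF, hGc⟩
          by_cases hxG : x ∈ G
          · exact Or.inl ⟨Finset.insert_subset hxG hEG, hGF, hGc⟩
          · refine Or.inr ⟨hEG, fun y hy => Finset.mem_erase.2 ⟨?_, hGF hy⟩, hGc⟩
            intro h
            exact hxG (h ▸ hy)
        · rintro (⟨hEG, hGF, hGc⟩ | ⟨hEG, hGF, hGc⟩)
          · exact ⟨(Finset.subset_insert x E).trans hEG, hGF, hGc⟩
          · exact ⟨hEG, hGF.trans (Finset.erase_subset x F), hGc⟩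
      have hdd : (Δ \ Ivl t (insert x E) F) \ Ivl t E (F.erase x) = Δ \ Ivl t E F := by
        rw [Set.diff_diff, ← hsplit]
      have hxFcard : (F.erase x).card = F.card - 1 := Finset.card_erase_of_mem hxF
      -- second recursion: (Δ \ Ivl t (insert x E) F, E, F.erase x)
      have hsub2 : E ⊆ F.erase x := by
        intro y hy
        exact Finset.mem_erase.2 ⟨fun h => hxE (h ▸ hy), hEF hy⟩
      have h1b : ∀ G : Finset (Fin n), G.card ≤ t → G ∈ Δ \ Ivl t (insert x E) F := by
        intro G hGc
        refine ⟨h1 G hGc, ?_⟩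
        rintro ⟨-, -, hc⟩
        omega
      have h2b : ∀ G : Finset (Fin n), E ⊆ G → G ⊆ F.erase x →
          G ∈ Δ \ Ivl t (insert x E) F := by
        intro G hEG hGF
        refine ⟨h2 G hEG (hGF.trans (Finset.erase_subset x F)), ?_⟩
        rintro ⟨hiG, -, -⟩
        have hxG : x ∈ G := hiG (Finset.mem_insert_self x E)
        exact (Finset.mem_erase.1 (hGF hxG)).1 rfl
      have h3b : ∀ G ∈ Δ \ Ivl t (insert x E) F, E ⊆ G → t < G.card → G ⊆ F.erase x := by
        intro G hG hEG hGc
        have hGF : G ⊆ F := h3 G hG.1 hEG hGc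
        have hxG : x ∉ G := by
          intro hxG
          exact hG.2 ⟨Finset.insert_subset hxG hEG, hGF, hGc⟩
        intro y hy
        exact Finset.mem_erase.2 ⟨fun h => hxG (h ▸ hy), hGF hy⟩
      obtain ⟨M₂, hM₂⟩ := ih (Δ \ Ivl t (insert x E) F) E (F.erase x)
        (by omega) hsub2 hEt h1b h2b h3b L (by rw [hdd]; exact hL)
      -- first recursion: (Δ, insert x E, F)
      have hsub1 : insert x E ⊆ F := Finset.insert_subset hxF hEF
      have h2a : ∀ G : Finset (Fin n), insert x E ⊆ G → G ⊆ F → G ∈ Δ :=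
        fun G hG hGF => h2 G ((Finset.subset_insert x E).trans hG) hGF
      have h3a : ∀ G ∈ Δ, insert x E ⊆ G → t < G.card → G ⊆ F :=
        fun G hG hiG hGc => h3 G hG ((Finset.subset_insert x E).trans hiG) hGc
      obtain ⟨M₁, hM₁⟩ := ih Δ (insert x E) F (by omega) hsub1 (by omega) h1 h2a h3a
        (M₂ ++ L) hM₂
      exact ⟨M₁ ++ M₂, by rw [List.append_assoc]; exact hM₁⟩

/-- Main lemma: the `t`-closure of a `t`-collapsible complex admits a simplicial order. -/
lemma closure_chordal (t : ℕ) :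
    ∀ (Lc : List (Finset (Fin n))) (Δ : Set (Finset (Fin n))),
      IsComplex Δ → IsFreeSeq Δ Lc → (∀ E ∈ Lc, E.card ≤ t) →
      collapseList Δ Lc = ∅ → ∃ L, IsSimpOrder t (dClosure t Δ) L := by
  intro Lc
  induction Lc with
  | nil =>
    intro Δ _ _ _ hc
    have hΔ : Δ = ∅ := hc
    subst hΔ
    refine ⟨[], ?_⟩
    show dClosure t (∅ : Set (Finset (Fin n))) = fullSkel n t
    ext G
    simp only [dClosure, fullSkel, Set.mem_setOf_eq]
    constructor
    · rintro (h | h)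
      · exact h
      · by_contra hc'
        push_neg at hc'
        obtain ⟨H, hHG, hHc⟩ := Finset.exists_subset_card_eq (s := G) (n := t + 1) (by omega)
        exact (h H hHG hHc)
    · exact Or.inl
  | cons E Lc ih =>
    intro Δ hcomp hseq hcards hcoll
    obtain ⟨⟨hEΔ, huniq⟩, hseq'⟩ := hseq
    obtain ⟨F, ⟨hFfac, hEF⟩, huF⟩ := huniq
    have hEt : E.card ≤ t := hcards E (List.mem_cons_self)
    have hstar : ∀ G ∈ Δ, E ⊆ G → G ⊆ F := by
      intro G hG hEG
      obtain ⟨F', hF', hGF'⟩ := exists_facet Δ hG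
      have h := huF F' ⟨hF', hEG.trans hGF'⟩
      exact h ▸ hGF'
    have hcomp' : IsComplex (collapseFace Δ E) := by
      intro G hG G' hG'
      exact ⟨hcomp G hG.1 G' hG', fun hE => hG.2 (hE.trans hG')⟩
    have hcards' : ∀ E' ∈ Lc, E'.card ≤ t := fun E' h => hcards E' (List.mem_cons_of_mem E h)
    obtain ⟨L', hL'⟩ := ih (collapseFace Δ E) hcomp' hseq' hcards' hcoll
    have hstar2 : ∀ G ∈ dClosure t Δ, E ⊆ G → t < G.card → G ⊆ F := by
      intro G hG hEG hGc y hy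
      have hsub : ∀ H ⊆ G, H.card = t + 1 → H ∈ Δ := by
        rcases hG with h | h
        · exact absurd h (by omega)
        · exact h
      have hiy : insert y E ⊆ G := Finset.insert_subset hy hEG
      have hcy : (insert y E).card ≤ t + 1 :=
        le_trans (Finset.card_insert_le y E) (by omega)
      obtain ⟨H, hH1, hH2, hH3⟩ := Finset.exists_subsuperset_card_eq hiy hcy (by omega)
      have hHΔ := hsub H hH2 hH3
      have hHF : H ⊆ F := hstar H hHΔ ((Finset.subset_insert y E).trans hH1)
      exact hHF (hH1 (Finset.mem_insert_self y E))
    have hkey : dClosure t (collapseFace Δ E) = dClosure t Δ \ Ivl t E F := by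
      ext G
      constructor
      · rintro (h | h)
        · exact ⟨Or.inl h, by rintro ⟨-, -, hc⟩; omega⟩
        · refine ⟨Or.inr fun H hHG hHc => (h H hHG hHc).1, ?_⟩
          rintro ⟨hEG, hGF, hGc⟩
          obtain ⟨H, hH1, hH2, hH3⟩ := Finset.exists_subsuperset_card_eq (n := t + 1) hEG
            (by omega) (by omega)
          exact (h H hH2 hH3).2 hH1
      · rintro ⟨h, hni⟩
        rcases h with h | h
        · exact Or.inl h
        · by_cases hGc : G.card ≤ t
          · exact Or.inl hGc
          push_neg at hGc
          refine Or.inr fun H hHG hHc => ⟨h H hHG hHc, fun hEH => hni ?_⟩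
          have hEG : E ⊆ G := hEH.trans hHG
          exact ⟨hEG, hstar2 G (Or.inr h) hEG hGc, hGc⟩
    obtain ⟨M, hM⟩ := interval_del t F.card (dClosure t Δ) E F (Nat.sub_le _ _) hEF hEt
      (fun G hGc => Or.inl hGc)
      (fun G hEG hGF => Or.inr fun H hHG hHc => hcomp F hFfac.1 H (hHG.trans hGF))
      hstar2 L' (by rw [← hkey]; exact hL')
    exact ⟨M ++ L', hM⟩

end ChordalPaper

open ChordalPaper in
/-- a `d`-collapsible complex all of whose nonfaces have dimension `≥ d`
is chordal, i.e. `t`-chordal for every positive `t`. -/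
theorem stmt13 (n d : ℕ) (hd : 1 ≤ d) (Γ : Set (Finset (Fin n))) (hΓ : IsComplex Γ)
    (hcol : Collapsible d Γ)
    (hnf : ∀ F : Finset (Fin n), F ∉ Γ → d + 1 ≤ F.card) :
    ∀ t, 1 ≤ t → DChordal t Γ := by
  intro t ht
  rcases le_or_gt d t with hdt | htd
  · obtain ⟨Lc, h1, h2, h3⟩ := hcol
    exact closure_chordal t Lc Γ hΓ h1 (fun E hE => le_trans (h2 E hE) hdt) h3
  · -- t < d : the t-closure of Γ is the full simplex, which is also the t-closure of
    -- the (trivially t-collapsible) full complex.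
    have huc : IsComplex (Set.univ : Set (Finset (Fin n))) := fun _ _ _ _ => Set.mem_univ _
    have hfacet : IsFacet (Set.univ : Set (Finset (Fin n))) Finset.univ :=
      ⟨Set.mem_univ _, fun G _ hG => Finset.univ_subset_iff.1 hG⟩
    have hfree : IsFreeFace (Set.univ : Set (Finset (Fin n))) ∅ := by
      refine ⟨Set.mem_univ _, Finset.univ, ⟨hfacet, Finset.empty_subset _⟩, ?_⟩
      rintro F' ⟨hF', -⟩
      exact (hF'.2 Finset.univ (Set.mem_univ _) (Finset.subset_univ F')).symm
    have hcoll0 : collapseList (Set.univ : Set (Finset (Fin n))) [∅] = ∅ := by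
      show collapseFace (Set.univ : Set (Finset (Fin n))) ∅ = ∅
      ext G
      simp [collapseFace]
    obtain ⟨L, hL⟩ := closure_chordal t [∅] Set.univ huc ⟨hfree, trivial⟩
      (by intro E hE; simp at hE; simp [hE]) hcoll0
    have h1 : dClosure t (Set.univ : Set (Finset (Fin n))) = Set.univ := by
      ext G
      simp only [dClosure, Set.mem_setOf_eq, Set.mem_univ, iff_true]
      exact Or.inr fun H _ _ => Set.mem_univ H
    have h2 : dClosure t Γ = Set.univ := by
      ext G
      simp only [dClosure, Set.mem_setOf_eq, Set.mem_univ, iff_true]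
      refine Or.inr fun H hHG hHc => ?_
      by_contra hH
      have := hnf H hH
      omega
    refine ⟨L, ?_⟩
    rw [h2, ← h1]
    exact hL
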